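/- Let c > 0 and define k(s) = arcsinh((1/√c)·sin(√c·s)) and h(s) = -√((c+1)/c)·arctan(cos(√c·s)/√(c + sin²(√c·s))) for s ∈ (0, π/√c). Then k'(s)² + h'(s)² = 1 on this interval. -/

import Mathlib

open Real Set

theorem spherical_profile_arclength_hyperbolic (c : ℝ) (hc : 0 < c)
    (k h : ℝ → ℝ)
    (hk : ∀ s, k s = Real.arsinh ((1 / Real.sqrt c) * Real.sin (Real.sqrt c * s)))
    (hh : ∀ s, h s = -Real.sqrt ((c + 1) / c) *
      Real.arctan (Real.cos (Real.sqrt c * s) /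
        Real.sqrt (c + Real.sin (Real.sqrt c * s) ^ 2))) :
    ∀ s ∈ Ioo 0 (Real.pi / Real.sqrt c),
      (deriv k s) ^ 2 + (deriv h s) ^ 2 = 1 := by
  intro s _
  have hb0 : 0 < Real.sqrt c := Real.sqrt_pos.mpr hc
  set b := Real.sqrt c with hbdef
  have hb2 : b ^ 2 = c := Real.sq_sqrt hc.le
  set S := Real.sin (b * s) with hSdef
  set C := Real.cos (b * s) with hCdef
  have hpy : S ^ 2 + C ^ 2 = 1 := Real.sin_sq_add_cos_sq _
  have hden : 0 < c + S ^ 2 := by positivity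
  set V := Real.sqrt (c + S ^ 2) with hVdef
  have hV0 : 0 < V := Real.sqrt_pos.mpr hden
  have hV2 : V ^ 2 = c + S ^ 2 := Real.sq_sqrt hden.le
  have hT2 : (Real.sqrt (c + 1)) ^ 2 = c + 1 := Real.sq_sqrt (by linarith)
  set T := Real.sqrt (c + 1) with hTdef
  -- derivative of inner linear map
  have hlin : HasDerivAt (fun x : ℝ => b * x) b s := by
    simpa using (hasDerivAt_id s).const_mul b
  have hsin : HasDerivAt (fun x : ℝ => Real.sin (b * x)) (C * b) s :=
    (Real.hasDerivAt_sin (b * s)).comp s hlin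
  have hcos : HasDerivAt (fun x : ℝ => Real.cos (b * x)) (-S * b) s :=
    (Real.hasDerivAt_cos (b * s)).comp s hlin
  -- derivative of k
  have hkfun : k = fun x => Real.arsinh ((1 / b) * Real.sin (b * x)) := funext hk
  have hK : HasDerivAt k (b * C / V) s := by
    have hinner : HasDerivAt (fun x => (1 / b) * Real.sin (b * x)) ((1 / b) * (C * b)) s :=
      hsin.const_mul (1 / b)
    have hcomp := (Real.hasDerivAt_arsinh ((1 / b) * S)).comp s hinner
    rw [hkfun]
    convert hcomp using 1
    · rfl
    · rfl
    · rfl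
    have h1 : 1 + (1 / b * S) ^ 2 = (c + S ^ 2) / c := by
      field_simp
      linear_combination (-S^2) * hb2
    rw [h1, Real.sqrt_div hden.le, ← hbdef, ← hVdef]
    field_simp
  -- derivative of h
  have hhfun : h = fun x => -Real.sqrt ((c + 1) / c) *
      Real.arctan (Real.cos (b * x) / Real.sqrt (c + Real.sin (b * x) ^ 2)) := funext hh
  have hH : HasDerivAt h (T * S / V) s := by
    have hq : HasDerivAt (fun x => c + Real.sin (b * x) ^ 2)
        ((2 : ℕ) * S ^ 1 * (C * b)) s := (hsin.pow 2).const_add c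
    have hv : HasDerivAt (fun x => Real.sqrt (c + Real.sin (b * x) ^ 2))
        (((2 : ℕ) * S ^ 1 * (C * b)) / (2 * V)) s := hq.sqrt hden.ne'
    have hw : HasDerivAt (fun x => Real.cos (b * x) / Real.sqrt (c + Real.sin (b * x) ^ 2))
        (((-S * b) * V - C * (((2 : ℕ) * S ^ 1 * (C * b)) / (2 * V))) / V ^ 2) s :=
      hcos.div hv hV0.ne'
    have harc := ((Real.hasDerivAt_arctan (C / V)).comp s hw).const_mul
      (-Real.sqrt ((c + 1) / c))
    rw [hhfun]
    convert harc using 1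
    · rfl
    · rfl
    · rfl
    have hR : Real.sqrt ((c + 1) / c) = T / b := by
      rw [Real.sqrt_div (by linarith)]
    rw [hR]
    have h2 : 1 + (C / V) ^ 2 = (c + 1) / V ^ 2 := by
      field_simp
      linear_combination hV2 + hpy
    rw [h2]
    field_simp
    ring_nf
    linear_combination (-2*T*S*b*(V + V^3) + 2*T*S*b*V*(C^2+S^2) + 2*T*S*(b*V^3 - 1)) * hV2 + (-4*T*S*b*V^3 + 2*T*S*b*V*(c+S^2) + 2*T*S*(b*V^3 - 1)) * hpy
  rw [hK.deriv, hH.deriv]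
  have hVne := hV0.ne'
  field_simp
  linear_combination (C^2)*hb2 + (S^2)*hT2 + (-1)*hV2 + c*hpy
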